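/- Let G be a finite group with subgroups H ≤ A ⊴ G (A normal in G), and let r, s be integers with 0 ≤ r ≤ |N_A(H)/H| − 1, gcd(2, |N_A(H)/H| − 1) dividing r, and 0 ≤ s ≤ |N_A(H)/H|. If G = N_G(H)A and N_A(H)/H is an (r,s)-regular set of the group N_G(H)/H, then A is an (r,s)-regular set of the pair (G,H). -/

import Mathlib

open scoped Pointwise

/-- A subset `C` of the vertices of a graph `Γ` is an `(r,s)`-regular set if every vertex
in `C` has exactly `r` neighbours in `C` and every vertex outside `C` has exactly `s`
neighbours in `C`. -/
def IsRegularVertexSet {V : Type*} (Γ : SimpleGraph V) (C : Set V) (r s : ℕ) : Prop :=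
  (∀ v ∈ C, {w | w ∈ C ∧ Γ.Adj v w}.ncard = r) ∧
  ∀ v ∉ C, {w | w ∈ C ∧ Γ.Adj v w}.ncard = s

/-- The coset graph `Cos(G,H,U)` on the left cosets of `H` in `G`:
`g₁H` and `g₂H` are adjacent iff `g₁⁻¹ g₂ ∈ U`. -/
def cosetGraph {G : Type*} [Group G] (H : Subgroup G) (U : Set G) : SimpleGraph (G ⧸ H) :=
  SimpleGraph.fromRel fun C D =>
    ∃ g₁ g₂ : G, QuotientGroup.mk g₁ = C ∧ QuotientGroup.mk g₂ = D ∧ g₁⁻¹ * g₂ ∈ U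

/-- `U` is a valid connection set for a coset graph `Cos(G,H,U)`:
inverse-closed, disjoint from `H`, and a union of double cosets of `H` (`HUH = U`). -/
def IsCosetGraphConnectionSet {G : Type*} [Group G] (H : Subgroup G) (U : Set G) : Prop :=
  U⁻¹ = U ∧ (H : Set G) ∩ U = ∅ ∧ (H : Set G) * U * (H : Set G) = U

/-- `A` is an `(r,s)`-regular set of the pair `(G,H)`: there is a coset graph
`Cos(G,H,U)` in which the set of left cosets of `H` in `A` is an `(r,s)`-regular set. -/
def IsRegularSetOfPair {G : Type*} [Group G] (H A : Subgroup G) (r s : ℕ) : Prop :=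
  ∃ U : Set G, IsCosetGraphConnectionSet H U ∧
    IsRegularVertexSet (cosetGraph H U)
      {C : G ⧸ H | ∃ a ∈ A, QuotientGroup.mk a = C} r s

/-- `A` is a perfect code of the pair `(G,H)` iff it is a `(0,1)`-regular set of `(G,H)`. -/
def IsPerfectCodeOfPair {G : Type*} [Group G] (H A : Subgroup G) : Prop :=
  IsRegularSetOfPair H A 0 1

/-- A subgroup `A` is an `(r,s)`-regular set of `G` iff it is an `(r,s)`-regular set of
the pair `(G,1)`, i.e. an `(r,s)`-regular set in some Cayley graph of `G`. -/
def IsRegularSetOfGroup {G : Type*} [Group G] (A : Subgroup G) (r s : ℕ) : Prop :=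
  IsRegularSetOfPair ⊥ A r s

/-- A subgroup `A` is a perfect code of `G` iff it is a `(0,1)`-regular set of `G`. -/
def IsPerfectCodeOfGroup {G : Type*} [Group G] (A : Subgroup G) : Prop :=
  IsRegularSetOfGroup A 0 1

/-- The conjugate subgroup `K^t = t⁻¹ K t`. -/
def conjSub {G : Type*} [Group G] (K : Subgroup G) (t : G) : Subgroup G :=
  K.map (MulAut.conj t⁻¹).toMonoidHom

/-- The subgroup `N_A(H)/H` of the quotient group `N_G(H)/H`, where
`N_A(H) = N_G(H) ∩ A`. -/
def NAHmodH {G : Type*} [Group G] (H A : Subgroup G) :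
    Subgroup ((Subgroup.normalizer (H : Set G)) ⧸ H.subgroupOf (Subgroup.normalizer (H : Set G))) :=
  Subgroup.map (QuotientGroup.mk' (H.subgroupOf (Subgroup.normalizer (H : Set G)))) (A.subgroupOf (Subgroup.normalizer (H : Set G)))

theorem cosetGraph_adj' {G : Type*} [Group G] {H : Subgroup G} {U : Set G}
    (hc : IsCosetGraphConnectionSet H U) (g₁ g₂ : G) :
    (cosetGraph H U).Adj (QuotientGroup.mk g₁) (QuotientGroup.mk g₂) ↔ g₁⁻¹ * g₂ ∈ U := by
  obtain ⟨hinv, hdisj, hmul⟩ := hc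
  constructor
  · rintro ⟨hne, hrel | hrel⟩
    · obtain ⟨a, b, ha, hb, hab⟩ := hrel
      have h1 : a⁻¹ * g₁ ∈ H := QuotientGroup.eq.mp ha
      have h2 : b⁻¹ * g₂ ∈ H := QuotientGroup.eq.mp hb
      have : (a⁻¹ * g₁)⁻¹ * (a⁻¹ * b) * (b⁻¹ * g₂) ∈ (H : Set G) * U * (H : Set G) :=
        ⟨_, ⟨_, inv_mem h1, _, hab, rfl⟩, _, h2, rfl⟩
      rw [hmul] at this
      convert this using 1
      group
    · obtain ⟨a, b, ha, hb, hab⟩ := hrel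
      have h1 : a⁻¹ * g₂ ∈ H := QuotientGroup.eq.mp ha
      have h2 : b⁻¹ * g₁ ∈ H := QuotientGroup.eq.mp hb
      have key : (a⁻¹ * g₂)⁻¹ * (a⁻¹ * b) * (b⁻¹ * g₁) ∈ (H : Set G) * U * (H : Set G) :=
        ⟨_, ⟨_, inv_mem h1, _, hab, rfl⟩, _, h2, rfl⟩
      rw [hmul] at key
      have : g₂⁻¹ * g₁ ∈ U := by convert key using 1; group
      rw [← hinv]
      simpa using Set.inv_mem_inv.mpr this
  · intro hU
    refine ⟨?_, Or.inl ⟨g₁, g₂, rfl, rfl, hU⟩⟩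
    intro heq
    have : g₁⁻¹ * g₂ ∈ H := QuotientGroup.eq.mp heq
    exact Set.eq_empty_iff_forall_notMem.mp hdisj _ ⟨this, hU⟩

def cosetLift {G : Type*} [Group G] (H : Subgroup G) (g : G) :
    ((Subgroup.normalizer (H : Set G)) ⧸ H.subgroupOf (Subgroup.normalizer (H : Set G))) → G ⧸ H :=
  fun q => Quotient.liftOn' q (fun u => QuotientGroup.mk (g * u))
    (by
      intro a b hab
      rw [QuotientGroup.leftRel_apply] at hab
      refine QuotientGroup.eq.mpr ?_
      have : ((a⁻¹ * b : (Subgroup.normalizer (H : Set G))) : G) ∈ H := hab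
      convert this using 1
      push_cast
      group)

theorem cosetLift_mk {G : Type*} [Group G] (H : Subgroup G) (g : G) (u : (Subgroup.normalizer (H : Set G))) :
    cosetLift H g (QuotientGroup.mk u) = QuotientGroup.mk (g * u) := rfl

theorem cosetLift_injective {G : Type*} [Group G] (H : Subgroup G) (g : G) :
    Function.Injective (cosetLift H g) := by
  intro q q' h
  induction q using Quotient.inductionOn'
  induction q' using Quotient.inductionOn'
  rename_i u u'
  rw [cosetLift_mk, cosetLift_mk] at h
  have h2 : (g * u)⁻¹ * (g * u') ∈ H := QuotientGroup.eq.mp h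
  refine QuotientGroup.eq.mpr ?_
  show ((u⁻¹ * u' : (Subgroup.normalizer (H : Set G))) : G) ∈ H
  convert h2 using 1
  push_cast
  group

theorem mem_NAHmodH_aux {G : Type*} [Group G] {H A : Subgroup G} (hHA : H ≤ A)
    (m : (Subgroup.normalizer (H : Set G))) :
    (QuotientGroup.mk m : (Subgroup.normalizer (H : Set G)) ⧸ H.subgroupOf (Subgroup.normalizer (H : Set G))) ∈ NAHmodH H A ↔
      (m : G) ∈ A := by
  constructor
  · rintro ⟨x, hx, hxm⟩
    have heq : (QuotientGroup.mk x : (Subgroup.normalizer (H : Set G)) ⧸ H.subgroupOf (Subgroup.normalizer (H : Set G)))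
        = QuotientGroup.mk m := hxm
    have h0 : (x⁻¹ * m : (Subgroup.normalizer (H : Set G))) ∈ H.subgroupOf (Subgroup.normalizer (H : Set G)) := QuotientGroup.eq.mp heq
    have h1 : ((x⁻¹ * m : (Subgroup.normalizer (H : Set G))) : G) ∈ H := Subgroup.mem_subgroupOf.mp h0
    have h2 : (x : G) ∈ A := hx
    have h3 : ((x⁻¹ * m : (Subgroup.normalizer (H : Set G))) : G) ∈ A := hHA h1
    have : (x : G) * ((x⁻¹ * m : (Subgroup.normalizer (H : Set G))) : G) = (m : G) := by push_cast; group
    rw [← this]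
    exact mul_mem h2 h3
  · intro hm
    exact ⟨m, hm, rfl⟩

theorem mkbot_injective {Q : Type*} [Group Q] :
    Function.Injective (QuotientGroup.mk : Q → Q ⧸ (⊥ : Subgroup Q)) := by
  intro x y h
  have := QuotientGroup.eq.mp h
  rw [Subgroup.mem_bot] at this
  exact inv_mul_eq_one.mp this

/-- **Theorem C (forward direction).** Let `H ≤ A ⊴ G`, `0 ≤ r ≤ |N_A(H)/H| − 1` with
`gcd(2, |N_A(H)/H| − 1)` dividing `r`, and `0 ≤ s ≤ |N_A(H)/H|`. If `G = N_G(H)A` and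
`N_A(H)/H` is an `(r,s)`-regular set of `N_G(H)/H`, then `A` is an `(r,s)`-regular set
of `(G,H)`. -/
theorem theoremC_forward {G : Type*} [Group G] [Fintype G] (H A : Subgroup G)
    (hHA : H ≤ A) (hAnG : A.Normal) (r s : ℕ)
    (hr : r ≤ Nat.card ↥(NAHmodH H A) - 1)
    (hgcd : Nat.gcd 2 (Nat.card ↥(NAHmodH H A) - 1) ∣ r)
    (hs : s ≤ Nat.card ↥(NAHmodH H A))
    (hGNA : ((Subgroup.normalizer (H : Set G)) : Set G) * (A : Set G) = Set.univ)
    (hreg : IsRegularSetOfGroup (NAHmodH H A) r s) :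
    IsRegularSetOfPair H A r s := by
  classical
  obtain ⟨U', hconn', hC'in, hC'out⟩ := hreg
  obtain ⟨hUinv', hUdisj', hUmul'⟩ := hconn'
  -- the lifted connection set in G
  set U : Set G := {x : G | ∃ hx : x ∈ (Subgroup.normalizer (H : Set G)),
      (QuotientGroup.mk (⟨x, hx⟩ : (Subgroup.normalizer (H : Set G))) :
        (Subgroup.normalizer (H : Set G)) ⧸ H.subgroupOf (Subgroup.normalizer (H : Set G))) ∈ U'} with hUdef
  have hmemU : ∀ (u : (Subgroup.normalizer (H : Set G))), (u : G) ∈ U ↔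
      (QuotientGroup.mk u : (Subgroup.normalizer (H : Set G)) ⧸ H.subgroupOf (Subgroup.normalizer (H : Set G))) ∈ U' := by
    intro u
    constructor
    · rintro ⟨hx, hm⟩
      convert hm using 2
    · intro hm
      exact ⟨u.2, by rwa [Subtype.coe_eta]⟩
  have hUsubN : ∀ x ∈ U, x ∈ (Subgroup.normalizer (H : Set G)) := fun x hx => hx.1
  -- the three connection-set conditions
  have hconnU : IsCosetGraphConnectionSet H U := by
    refine ⟨?_, ?_, ?_⟩
    · ext x
      simp only [Set.mem_inv]
      constructor
      · rintro ⟨hx, hm⟩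
        have hx' : x ∈ (Subgroup.normalizer (H : Set G)) := by simpa using inv_mem hx
        refine ⟨hx', ?_⟩
        have : (⟨x⁻¹, hx⟩ : (Subgroup.normalizer (H : Set G))) = (⟨x, hx'⟩ : (Subgroup.normalizer (H : Set G)))⁻¹ := rfl
        rw [this, QuotientGroup.mk_inv] at hm
        rw [← hUinv']
        exact Set.mem_inv.mpr hm
      · rintro ⟨hx, hm⟩
        have hx' : x⁻¹ ∈ (Subgroup.normalizer (H : Set G)) := inv_mem hx
        refine ⟨hx', ?_⟩
        have : (⟨x⁻¹, hx'⟩ : (Subgroup.normalizer (H : Set G))) = (⟨x, hx⟩ : (Subgroup.normalizer (H : Set G)))⁻¹ := rfl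
        rw [this, QuotientGroup.mk_inv]
        exact Set.mem_inv.mp (by rw [hUinv']; exact hm)
    · rw [Set.eq_empty_iff_forall_notMem]
      rintro x ⟨hxH, hxN, hm⟩
      have h1 : (QuotientGroup.mk (⟨x, hxN⟩ : (Subgroup.normalizer (H : Set G))) :
          (Subgroup.normalizer (H : Set G)) ⧸ H.subgroupOf (Subgroup.normalizer (H : Set G))) = 1 :=
        (QuotientGroup.eq_one_iff _).mpr (Subgroup.mem_subgroupOf.mpr hxH)
      rw [h1] at hm
      exact Set.eq_empty_iff_forall_notMem.mp hUdisj' 1 ⟨Subgroup.mem_bot.mpr rfl, hm⟩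
    · apply Set.Subset.antisymm
      · rintro x ⟨y, ⟨h₁, hh₁, u, hu, rfl⟩, h₂, hh₂, rfl⟩
        obtain ⟨huN, hum⟩ := hu
        have hh₁N : h₁ ∈ (Subgroup.normalizer (H : Set G)) := Subgroup.le_normalizer hh₁
        have hh₂N : h₂ ∈ (Subgroup.normalizer (H : Set G)) := Subgroup.le_normalizer hh₂
        have hxN : h₁ * u * h₂ ∈ (Subgroup.normalizer (H : Set G)) := mul_mem (mul_mem hh₁N huN) hh₂N
        refine ⟨hxN, ?_⟩
        have heq : (⟨h₁ * u * h₂, hxN⟩ : (Subgroup.normalizer (H : Set G)))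
            = ⟨h₁, hh₁N⟩ * ⟨u, huN⟩ * ⟨h₂, hh₂N⟩ := rfl
        rw [heq]
        have e1 : (QuotientGroup.mk (⟨h₁, hh₁N⟩ : (Subgroup.normalizer (H : Set G))) :
            (Subgroup.normalizer (H : Set G)) ⧸ H.subgroupOf (Subgroup.normalizer (H : Set G))) = 1 :=
          (QuotientGroup.eq_one_iff _).mpr (Subgroup.mem_subgroupOf.mpr hh₁)
        have e2 : (QuotientGroup.mk (⟨h₂, hh₂N⟩ : (Subgroup.normalizer (H : Set G))) :
            (Subgroup.normalizer (H : Set G)) ⧸ H.subgroupOf (Subgroup.normalizer (H : Set G))) = 1 :=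
          (QuotientGroup.eq_one_iff _).mpr (Subgroup.mem_subgroupOf.mpr hh₂)
        rw [QuotientGroup.mk_mul, QuotientGroup.mk_mul, e1, e2, one_mul, mul_one]
        exact hum
      · intro u hu
        exact ⟨1 * u, ⟨1, H.one_mem, u, hu, rfl⟩, 1, H.one_mem, by group⟩
  have memC : ∀ g : G, (QuotientGroup.mk g : G ⧸ H) ∈
      {C : G ⧸ H | ∃ a ∈ A, QuotientGroup.mk a = C} ↔ g ∈ A := by
    intro g
    constructor
    · rintro ⟨b, hb, heq⟩
      have h1 : b⁻¹ * g ∈ H := QuotientGroup.eq.mp heq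
      have h2 : b⁻¹ * g ∈ A := hHA h1
      simpa using mul_mem hb h2
    · intro hg; exact ⟨g, hg, rfl⟩
  have key : ∀ (n : G) (hn : n ∈ (Subgroup.normalizer (H : Set G))) (a : G) (_ : a ∈ A),
      {w | w ∈ {C : G ⧸ H | ∃ a ∈ A, QuotientGroup.mk a = C} ∧
        (cosetGraph H U).Adj (QuotientGroup.mk (n * a)) w}.ncard
      = {x | x ∈ {C | ∃ b ∈ NAHmodH H A, QuotientGroup.mk b = C} ∧
          (cosetGraph (⊥ : Subgroup ((Subgroup.normalizer (H : Set G)) ⧸ H.subgroupOf (Subgroup.normalizer (H : Set G)))) U').Adj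
            (QuotientGroup.mk (QuotientGroup.mk (⟨n, hn⟩ : (Subgroup.normalizer (H : Set G))))) x}.ncard := by
    intro n hn a ha
    set nq : (Subgroup.normalizer (H : Set G)) ⧸ H.subgroupOf (Subgroup.normalizer (H : Set G)) := QuotientGroup.mk ⟨n, hn⟩ with hnq
    set D : Set ((Subgroup.normalizer (H : Set G)) ⧸ H.subgroupOf (Subgroup.normalizer (H : Set G))) :=
      {q | q ∈ U' ∧ nq * q ∈ NAHmodH H A} with hD
    have hS : {w | w ∈ {C : G ⧸ H | ∃ a ∈ A, QuotientGroup.mk a = C} ∧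
        (cosetGraph H U).Adj (QuotientGroup.mk (n * a)) w} = cosetLift H (n * a) '' D := by
      ext w
      constructor
      · rintro ⟨⟨a₂, ha₂, rfl⟩, hadj⟩
        have hadj' := (cosetGraph_adj' hconnU _ _).mp hadj
        obtain ⟨humem, hum⟩ := hadj'
        refine ⟨QuotientGroup.mk ⟨(n * a)⁻¹ * a₂, humem⟩, ⟨hum, ?_⟩, ?_⟩
        · rw [hnq, ← QuotientGroup.mk_mul, mem_NAHmodH_aux hHA]
          show n * ((n * a)⁻¹ * a₂) ∈ A
          have he : n * ((n * a)⁻¹ * a₂) = (n * a⁻¹ * n⁻¹) * a₂ := by group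
          rw [he]
          exact mul_mem (hAnG.conj_mem _ (inv_mem ha) n) ha₂
        · rw [cosetLift_mk]
          have he : (n * a) * ((n * a)⁻¹ * a₂) = a₂ := by group
          rw [he]
      · rintro ⟨q, ⟨hqU, hqB⟩, rfl⟩
        obtain ⟨u, rfl⟩ := QuotientGroup.mk_surjective q
        rw [cosetLift_mk]
        have hnu : n * (u : G) ∈ A := by
          rw [hnq, ← QuotientGroup.mk_mul, mem_NAHmodH_aux hHA] at hqB
          exact hqB
        constructor
        · refine ⟨(n * a) * (u : G), ?_, rfl⟩
          have he : (n * a) * (u : G) = (n * (u : G)) * ((u : G)⁻¹ * a * (u : G)) := by group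
          rw [he]
          exact mul_mem hnu (by simpa using hAnG.conj_mem a ha (u : G)⁻¹)
        · rw [cosetGraph_adj' hconnU]
          have he : (n * a)⁻¹ * ((n * a) * (u : G)) = (u : G) := by group
          rw [he]
          exact (hmemU u).mpr hqU
    have hT : {x | x ∈ {C | ∃ b ∈ NAHmodH H A, QuotientGroup.mk b = C} ∧
        (cosetGraph (⊥ : Subgroup ((Subgroup.normalizer (H : Set G)) ⧸ H.subgroupOf (Subgroup.normalizer (H : Set G)))) U').Adj
          (QuotientGroup.mk nq) x}
        = (fun q => (QuotientGroup.mk (nq * q) :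
            ((Subgroup.normalizer (H : Set G)) ⧸ H.subgroupOf (Subgroup.normalizer (H : Set G))) ⧸ (⊥ : Subgroup _))) '' D := by
      ext x
      constructor
      · rintro ⟨⟨b, hb, rfl⟩, hadj⟩
        have hadj' := (cosetGraph_adj' ⟨hUinv', hUdisj', hUmul'⟩ _ _).mp hadj
        refine ⟨nq⁻¹ * b, ⟨hadj', ?_⟩, ?_⟩
        · rw [mul_inv_cancel_left]; exact hb
        · show QuotientGroup.mk (nq * (nq⁻¹ * b)) = QuotientGroup.mk b
          rw [mul_inv_cancel_left]
      · rintro ⟨q, ⟨hqU, hqB⟩, rfl⟩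
        refine ⟨⟨nq * q, hqB, rfl⟩, ?_⟩
        rw [cosetGraph_adj' ⟨hUinv', hUdisj', hUmul'⟩, inv_mul_cancel_left]
        exact hqU
    rw [hS, hT, Set.ncard_image_of_injective D (cosetLift_injective H (n * a)),
        Set.ncard_image_of_injective D
          (fun x y h => mul_left_cancel (mkbot_injective h))]
  refine ⟨U, hconnU, ?_, ?_⟩
  · intro v hv
    obtain ⟨g, rfl⟩ := QuotientGroup.mk_surjective v
    have hgA : g ∈ A := (memC g).mp hv
    have hgmem : g ∈ ((Subgroup.normalizer (H : Set G)) : Set G) * (A : Set G) := by rw [hGNA]; trivial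
    obtain ⟨n, hnN, b, hbA, heq⟩ := Set.mem_mul.mp hgmem
    subst heq
    have hnA : n ∈ A := by simpa using mul_mem hgA (inv_mem hbA)
    refine (key n hnN b hbA).trans ?_
    exact hC'in _ ⟨QuotientGroup.mk ⟨n, hnN⟩, (mem_NAHmodH_aux hHA _).mpr hnA, rfl⟩
  · intro v hv
    obtain ⟨g, rfl⟩ := QuotientGroup.mk_surjective v
    have hgA : g ∉ A := fun h => hv ((memC g).mpr h)
    have hgmem : g ∈ ((Subgroup.normalizer (H : Set G)) : Set G) * (A : Set G) := by rw [hGNA]; trivial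
    obtain ⟨n, hnN, b, hbA, heq⟩ := Set.mem_mul.mp hgmem
    subst heq
    have hnA : n ∉ A := fun h => hgA (mul_mem h hbA)
    refine (key n hnN b hbA).trans ?_
    apply hC'out
    rintro ⟨c, hc, hceq⟩
    have : c = QuotientGroup.mk ⟨n, hnN⟩ := mkbot_injective hceq
    subst this
    exact hnA ((mem_NAHmodH_aux hHA _).mp hc)
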